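/- Assume the compatibility relation: ρ₁ + ρ₂ = ρ₁ρ₄ + ψ₂ if m₁ + m₂ ≤ n₁, and ρ₁ + ρ₂ = ψ₂ − ρ₅ρ₄ + 1 if m₁ + m₂ > n₁. For i ∈ {1,…,n₁}, j ∈ {1,…,n₂}, k ∈ {1,…,n₃}, set t̂₃ := t₃ − (m₃/n₂)t₂ − ((n₂−m₃)/n₂)(m₁/n₁)t₁ − (m₂/n₁)t₁ + ρ₃t₂ − (m₃/n₂)ρ₁t₁ + ρ₁t₁ + ρ₂t₁, θ_{i,j,k} := 2πι(k − (m₃/n₂)j − ((n₂−m₃)/n₂)(m₁/n₁)i − (m₂/n₁)i + t̂₃)/n₃, and z_{i,j,k} := (e^{sθ_{i,j,k}})_{s=0}^{n₃−1} ∈ ℂ^{n₃}. Then K₃ (z_{i,j,k} ⊗ y_{i,j} ⊗ xᵢ) = δz⁻¹(e^{θ_{i,j,k}} − 1) · (z_{i,j,k} ⊗ y_{i,j} ⊗ xᵢ), where xᵢ and y_{i,j} are as in Theorem 4.2 and ⊗ is the Kronecker product. (Theorem 4.4: eigenpairs of K₃ in the case cos θα − cos θβ cos θγ < 0.) -/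
import Mathlib


open Real Matrix

/-- The `n₁×n₁` block `S(a) = [[0, e^{−2πι t₁} I_a], [I_{n₁−a}, 0]]` with top-right
block of size `a × a` and bottom-left block of size `(n₁−a) × (n₁−a)`. -/
noncomputable def Sblk (n₁ : ℕ) (t₁ : ℝ) (a : ℕ) : Matrix (Fin n₁) (Fin n₁) ℂ :=
  Matrix.of fun s s' =>
    (if (s : ℕ) < a ∧ (s' : ℕ) = (s : ℕ) + (n₁ - a)
      then Complex.exp (-(2 * (π : ℂ) * Complex.I * (t₁ : ℂ))) else 0)
    + (if a ≤ (s : ℕ) ∧ (s' : ℕ) + a = (s : ℕ) then 1 else 0)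

/-- `J₁ = e^{2πι ρ₂ t₁} S(m₂)`. -/
noncomputable def J1 (n₁ : ℕ) (t₁ : ℝ) (ρ₂ m₂ : ℕ) : Matrix (Fin n₁) (Fin n₁) ℂ :=
  Complex.exp (2 * (π : ℂ) * Complex.I * (ρ₂ : ℂ) * (t₁ : ℂ)) • Sblk n₁ t₁ m₂

/-- `J₃` in the case `cos θα − cos θβ cos θγ < 0`: an `n₂ × n₂` block matrix with
`n₁ × n₁` blocks, top-right block `e^{−2πι t₂} I_{m₃} ⊗ J₁`, bottom-left block
`e^{2πι(ρ₁ρ₄+ψ₂)t₁} I_{n₂−m₃} ⊗ S(m₁+m₂)` if `m₁ + m₂ ≤ n₁`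
(resp. `e^{−2πι(ρ₅ρ₄−ψ₂)t₁} I_{n₂−m₃} ⊗ S(m₁+m₂−n₁)` if `m₁ + m₂ > n₁`),
all scaled by `e^{2πι ρ₃ t₂}`. -/
noncomputable def J3obtuse (n₁ n₂ : ℕ) (t₁ t₂ : ℝ) (ρ₁ ρ₂ ρ₃ ρ₄ ρ₅ ψ₂ m₁ m₂ m₃ : ℕ) :
    Matrix (Fin n₂ × Fin n₁) (Fin n₂ × Fin n₁) ℂ :=
  Matrix.of fun p q =>
    Complex.exp (2 * (π : ℂ) * Complex.I * (ρ₃ : ℂ) * (t₂ : ℂ)) *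
      ((if (p.1 : ℕ) < m₃ ∧ (q.1 : ℕ) = (p.1 : ℕ) + (n₂ - m₃) then
          Complex.exp (-(2 * (π : ℂ) * Complex.I * (t₂ : ℂ))) * J1 n₁ t₁ ρ₂ m₂ p.2 q.2
        else 0)
      + (if m₃ ≤ (p.1 : ℕ) ∧ (q.1 : ℕ) + m₃ = (p.1 : ℕ) then
          (if m₁ + m₂ ≤ n₁ then
            Complex.exp (2 * (π : ℂ) * Complex.I
                * (((ρ₁ : ℂ) * (ρ₄ : ℂ) + (ψ₂ : ℂ)) * (t₁ : ℂ)))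
              * Sblk n₁ t₁ (m₁ + m₂) p.2 q.2
          else
            Complex.exp (-(2 * (π : ℂ) * Complex.I
                * (((ρ₅ : ℂ) * (ρ₄ : ℂ) - (ψ₂ : ℂ)) * (t₁ : ℂ))))
              * Sblk n₁ t₁ (m₁ + m₂ - n₁) p.2 q.2)
        else 0))

/-- The Yee discretization `K₃` of `∂z`: `n₃ × n₃` block matrix with
`n₁n₂ × n₁n₂` blocks, `(1/δz)` times [`−I` on the block diagonal, `I` on the block
superdiagonal, `e^{2πι t₃} J₃` at block `(n₃−1, 0)`]. -/
noncomputable def K3 (n₁ n₂ n₃ : ℕ) (δz t₃ : ℝ)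
    (J : Matrix (Fin n₂ × Fin n₁) (Fin n₂ × Fin n₁) ℂ) :
    Matrix (Fin n₃ × Fin n₂ × Fin n₁) (Fin n₃ × Fin n₂ × Fin n₁) ℂ :=
  Matrix.of fun p q =>
    (1 / (δz : ℂ)) *
      ((if (q.1 : ℕ) = (p.1 : ℕ) + 1 ∧ q.2 = p.2 then 1 else 0)
        + (if (p.1 : ℕ) = n₃ - 1 ∧ (q.1 : ℕ) = 0
            then Complex.exp (2 * (π : ℂ) * Complex.I * (t₃ : ℂ)) * J p.2 q.2 else 0)
        - (if p = q then 1 else 0))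


lemma exp_nat_two_pi (n : ℕ) : Complex.exp (2 * (π : ℂ) * Complex.I * (n : ℂ)) = 1 := by
  have h := Complex.exp_int_mul_two_pi_mul_I (n : ℤ)
  rw [show ((n : ℤ) : ℂ) * (2 * (π : ℂ) * Complex.I) = 2 * (π : ℂ) * Complex.I * (n : ℂ) by
    push_cast; ring] at h
  exact h

lemma sblk_row (n₁ a : ℕ) (t₁ : ℝ) (ha : a ≤ n₁) (θ : ℂ)
    (hθ : Complex.exp ((n₁ : ℂ) * θ) = Complex.exp (2 * (π : ℂ) * Complex.I * (t₁ : ℂ)))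
    (s : Fin n₁) :
    ∑ s' : Fin n₁, Sblk n₁ t₁ a s s' * Complex.exp (((s' : ℕ) : ℂ) * θ)
      = Complex.exp (-(a : ℂ) * θ) * Complex.exp (((s : ℕ) : ℂ) * θ) := by
  rcases lt_or_ge (s : ℕ) a with h | h
  · have hj : (s : ℕ) + (n₁ - a) < n₁ := by omega
    rw [Finset.sum_eq_single_of_mem (⟨(s : ℕ) + (n₁ - a), hj⟩ : Fin n₁) (Finset.mem_univ _)]
    · have h2 : ¬ a ≤ (s : ℕ) := by omega
      have he : Sblk n₁ t₁ a s ⟨(s : ℕ) + (n₁ - a), hj⟩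
          = Complex.exp (-(2 * (π : ℂ) * Complex.I * (t₁ : ℂ))) := by
        simp [Sblk, h, h2]
      rw [he]
      show Complex.exp _ * Complex.exp ((((s : ℕ) + (n₁ - a) : ℕ) : ℂ) * θ) = _
      rw [show (((s : ℕ) + (n₁ - a) : ℕ) : ℂ) = ((s : ℕ) : ℂ) + ((n₁ : ℂ) - (a : ℂ)) by
          push_cast [Nat.cast_sub ha]; ring,
        show (((s : ℕ) : ℂ) + ((n₁ : ℂ) - (a : ℂ))) * θ
          = (n₁ : ℂ) * θ + (-(a : ℂ) * θ + ((s : ℕ) : ℂ) * θ) by ring,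
        Complex.exp_add, hθ, ← mul_assoc, ← Complex.exp_add, neg_add_cancel,
        Complex.exp_zero, one_mul, Complex.exp_add]
    · intro b _ hb
      have h1 : ¬((s : ℕ) < a ∧ (b : ℕ) = (s : ℕ) + (n₁ - a)) := by
        rintro ⟨_, hbe⟩; exact hb (Fin.ext hbe)
      have h2 : ¬(a ≤ (s : ℕ) ∧ (b : ℕ) + a = (s : ℕ)) := by omega
      simp [Sblk, h1, h2]
  · have hj : (s : ℕ) - a < n₁ := by omega
    rw [Finset.sum_eq_single_of_mem (⟨(s : ℕ) - a, hj⟩ : Fin n₁) (Finset.mem_univ _)]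
    · have h1 : ¬ (s : ℕ) < a := by omega
      have he : Sblk n₁ t₁ a s ⟨(s : ℕ) - a, hj⟩ = 1 := by
        have h3 : (s : ℕ) - a + a = (s : ℕ) := by omega
        simp [Sblk, h, h1, h3]
      rw [he, one_mul]
      show Complex.exp ((((s : ℕ) - a : ℕ) : ℂ) * θ) = _
      rw [show (((s : ℕ) - a : ℕ) : ℂ) = ((s : ℕ) : ℂ) - (a : ℂ) by
          push_cast [Nat.cast_sub h]; ring,
        show (((s : ℕ) : ℂ) - (a : ℂ)) * θ = -(a : ℂ) * θ + ((s : ℕ) : ℂ) * θ by ring,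
        Complex.exp_add]
    · intro b _ hb
      have hbn : (b : ℕ) ≠ (s : ℕ) - a := fun hbe => hb (Fin.ext hbe)
      have h1 : ¬((s : ℕ) < a ∧ (b : ℕ) = (s : ℕ) + (n₁ - a)) := by omega
      have h2 : ¬(a ≤ (s : ℕ) ∧ (b : ℕ) + a = (s : ℕ)) := by omega
      simp [Sblk, h1, h2]

lemma j3_row (n₁ n₂ : ℕ) (t₁ t₂ : ℝ) (ρ₁ ρ₂ ρ₃ ρ₄ ρ₅ ψ₂ m₁ m₂ m₃ : ℕ)
    (hm₁ : m₁ ≤ n₁) (hm₂ : m₂ ≤ n₁) (hm₃ : m₃ ≤ n₂)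
    (hc₁ : m₁ + m₂ ≤ n₁ → (ρ₁ : ℤ) + ρ₂ = (ρ₁ : ℤ) * ρ₄ + ψ₂)
    (hc₂ : n₁ < m₁ + m₂ → (ρ₁ : ℤ) + ρ₂ = (ψ₂ : ℤ) - (ρ₅ : ℤ) * ρ₄ + 1)
    (θi θij : ℂ)
    (hE1 : Complex.exp ((n₁ : ℂ) * θi) = Complex.exp (2 * (π : ℂ) * Complex.I * (t₁ : ℂ)))
    (hE2 : Complex.exp ((n₂ : ℂ) * θij)
      = Complex.exp (2 * (π : ℂ) * Complex.I * (t₂ : ℂ)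
          + 2 * (π : ℂ) * Complex.I * (ρ₁ : ℂ) * (t₁ : ℂ) - (m₁ : ℂ) * θi))
    (p : Fin n₂ × Fin n₁) :
    ∑ q : Fin n₂ × Fin n₁, J3obtuse n₁ n₂ t₁ t₂ ρ₁ ρ₂ ρ₃ ρ₄ ρ₅ ψ₂ m₁ m₂ m₃ p q *
        (Complex.exp (((q.1 : ℕ) : ℂ) * θij) * Complex.exp (((q.2 : ℕ) : ℂ) * θi))
      = Complex.exp (2 * (π : ℂ) * Complex.I * (ρ₃ : ℂ) * (t₂ : ℂ)
            + 2 * (π : ℂ) * Complex.I * ((ρ₁ : ℂ) + (ρ₂ : ℂ)) * (t₁ : ℂ)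
            - ((m₁ : ℂ) + (m₂ : ℂ)) * θi - (m₃ : ℂ) * θij) *
          (Complex.exp (((p.1 : ℕ) : ℂ) * θij) * Complex.exp (((p.2 : ℕ) : ℂ) * θi)) := by
  obtain ⟨w2, hw2⟩ := (Complex.exp_eq_exp_iff_exists_int).mp hE2
  obtain ⟨w1, hw1⟩ := (Complex.exp_eq_exp_iff_exists_int).mp hE1
  rw [Fintype.sum_prod_type]
  rcases lt_or_ge (p.1 : ℕ) m₃ with h | h
  · -- top-right branch
    have hj : (p.1 : ℕ) + (n₂ - m₃) < n₂ := by omega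
    rw [Finset.sum_eq_single_of_mem (⟨(p.1 : ℕ) + (n₂ - m₃), hj⟩ : Fin n₂) (Finset.mem_univ _)]
    · have h2 : ¬ m₃ ≤ (p.1 : ℕ) := by omega
      have he : ∀ q₂ : Fin n₁,
          J3obtuse n₁ n₂ t₁ t₂ ρ₁ ρ₂ ρ₃ ρ₄ ρ₅ ψ₂ m₁ m₂ m₃ p (⟨(p.1 : ℕ) + (n₂ - m₃), hj⟩, q₂)
            = Complex.exp (2 * (π : ℂ) * Complex.I * (ρ₃ : ℂ) * (t₂ : ℂ)) *
              (Complex.exp (-(2 * (π : ℂ) * Complex.I * (t₂ : ℂ)))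
                * (Complex.exp (2 * (π : ℂ) * Complex.I * (ρ₂ : ℂ) * (t₁ : ℂ))
                    * Sblk n₁ t₁ m₂ p.2 q₂)) := by
        intro q₂
        simp [J3obtuse, J1, h, h2, Matrix.smul_apply, smul_eq_mul]
      simp only [he]
      have hstep : ∀ q₂ : Fin n₁,
          Complex.exp (2 * (π : ℂ) * Complex.I * (ρ₃ : ℂ) * (t₂ : ℂ)) *
              (Complex.exp (-(2 * (π : ℂ) * Complex.I * (t₂ : ℂ)))
                * (Complex.exp (2 * (π : ℂ) * Complex.I * (ρ₂ : ℂ) * (t₁ : ℂ))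
                    * Sblk n₁ t₁ m₂ p.2 q₂)) *
            (Complex.exp ((((⟨(p.1 : ℕ) + (n₂ - m₃), hj⟩ : Fin n₂) : ℕ) : ℂ) * θij)
              * Complex.exp (((q₂ : ℕ) : ℂ) * θi))
          = (Complex.exp (2 * (π : ℂ) * Complex.I * (ρ₃ : ℂ) * (t₂ : ℂ))
              * Complex.exp (-(2 * (π : ℂ) * Complex.I * (t₂ : ℂ)))
              * Complex.exp (2 * (π : ℂ) * Complex.I * (ρ₂ : ℂ) * (t₁ : ℂ))
              * Complex.exp (((((p.1 : ℕ) : ℂ) + ((n₂ : ℂ) - (m₃ : ℂ)))) * θij))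
            * (Sblk n₁ t₁ m₂ p.2 q₂ * Complex.exp (((q₂ : ℕ) : ℂ) * θi)) := by
        intro q₂
        rw [show ((((⟨(p.1 : ℕ) + (n₂ - m₃), hj⟩ : Fin n₂) : ℕ) : ℂ))
            = ((p.1 : ℕ) : ℂ) + ((n₂ : ℂ) - (m₃ : ℂ)) by
          push_cast [Nat.cast_sub hm₃]; ring]
        ring
      simp only [hstep]
      rw [← Finset.mul_sum, sblk_row n₁ m₂ t₁ hm₂ θi hE1]
      simp only [← Complex.exp_add, ← mul_assoc]
      rw [Complex.exp_eq_exp_iff_exists_int]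
      exact ⟨w2, by linear_combination hw2⟩
    · intro b _ hb
      apply Finset.sum_eq_zero
      intro q₂ _
      have h1 : ¬((p.1 : ℕ) < m₃ ∧ (b : ℕ) = (p.1 : ℕ) + (n₂ - m₃)) := by
        rintro ⟨_, hbe⟩; exact hb (Fin.ext hbe)
      have h2 : ¬(m₃ ≤ (p.1 : ℕ) ∧ (b : ℕ) + m₃ = (p.1 : ℕ)) := by omega
      simp [J3obtuse, h1, h2]
  · -- bottom-left branch
    have hj : (p.1 : ℕ) - m₃ < n₂ := by omega
    rw [Finset.sum_eq_single_of_mem (⟨(p.1 : ℕ) - m₃, hj⟩ : Fin n₂) (Finset.mem_univ _)]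
    · have h1 : ¬ (p.1 : ℕ) < m₃ := by omega
      have h3 : (p.1 : ℕ) - m₃ + m₃ = (p.1 : ℕ) := by omega
      have hcastp : ((((⟨(p.1 : ℕ) - m₃, hj⟩ : Fin n₂) : ℕ) : ℂ))
          = ((p.1 : ℕ) : ℂ) - (m₃ : ℂ) := by
        push_cast [Nat.cast_sub h]; ring
      rcases le_or_gt (m₁ + m₂) n₁ with hle | hlt
      · have he : ∀ q₂ : Fin n₁,
            J3obtuse n₁ n₂ t₁ t₂ ρ₁ ρ₂ ρ₃ ρ₄ ρ₅ ψ₂ m₁ m₂ m₃ p (⟨(p.1 : ℕ) - m₃, hj⟩, q₂)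
              = Complex.exp (2 * (π : ℂ) * Complex.I * (ρ₃ : ℂ) * (t₂ : ℂ)) *
                (Complex.exp (2 * (π : ℂ) * Complex.I
                    * (((ρ₁ : ℂ) * (ρ₄ : ℂ) + (ψ₂ : ℂ)) * (t₁ : ℂ)))
                  * Sblk n₁ t₁ (m₁ + m₂) p.2 q₂) := by
          intro q₂
          simp [J3obtuse, h, h1, h3, hle]
        simp only [he]
        have hstep : ∀ q₂ : Fin n₁,
            Complex.exp (2 * (π : ℂ) * Complex.I * (ρ₃ : ℂ) * (t₂ : ℂ)) *
                (Complex.exp (2 * (π : ℂ) * Complex.I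
                    * (((ρ₁ : ℂ) * (ρ₄ : ℂ) + (ψ₂ : ℂ)) * (t₁ : ℂ)))
                  * Sblk n₁ t₁ (m₁ + m₂) p.2 q₂) *
              (Complex.exp ((((⟨(p.1 : ℕ) - m₃, hj⟩ : Fin n₂) : ℕ) : ℂ) * θij)
                * Complex.exp (((q₂ : ℕ) : ℂ) * θi))
            = (Complex.exp (2 * (π : ℂ) * Complex.I * (ρ₃ : ℂ) * (t₂ : ℂ))
                * Complex.exp (2 * (π : ℂ) * Complex.I
                    * (((ρ₁ : ℂ) * (ρ₄ : ℂ) + (ψ₂ : ℂ)) * (t₁ : ℂ)))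
                * Complex.exp ((((p.1 : ℕ) : ℂ) - (m₃ : ℂ)) * θij))
              * (Sblk n₁ t₁ (m₁ + m₂) p.2 q₂ * Complex.exp (((q₂ : ℕ) : ℂ) * θi)) := by
          intro q₂; rw [hcastp]; ring
        simp only [hstep]
        rw [← Finset.mul_sum, sblk_row n₁ (m₁ + m₂) t₁ hle θi hE1]
        have hcc : ((ρ₁ : ℂ) + (ρ₂ : ℂ)) = (ρ₁ : ℂ) * (ρ₄ : ℂ) + (ψ₂ : ℂ) := by
          exact_mod_cast hc₁ hle
        simp only [← Complex.exp_add, ← mul_assoc]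
        rw [Complex.exp_eq_exp_iff_exists_int]
        refine ⟨0, by push_cast; linear_combination (2 * (π : ℂ) * Complex.I * (t₁ : ℂ)) * hcc.symm⟩
      · have hle' : m₁ + m₂ - n₁ ≤ n₁ := by omega
        have he : ∀ q₂ : Fin n₁,
            J3obtuse n₁ n₂ t₁ t₂ ρ₁ ρ₂ ρ₃ ρ₄ ρ₅ ψ₂ m₁ m₂ m₃ p (⟨(p.1 : ℕ) - m₃, hj⟩, q₂)
              = Complex.exp (2 * (π : ℂ) * Complex.I * (ρ₃ : ℂ) * (t₂ : ℂ)) *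
                (Complex.exp (-(2 * (π : ℂ) * Complex.I
                    * (((ρ₅ : ℂ) * (ρ₄ : ℂ) - (ψ₂ : ℂ)) * (t₁ : ℂ))))
                  * Sblk n₁ t₁ (m₁ + m₂ - n₁) p.2 q₂) := by
          intro q₂
          have : ¬ m₁ + m₂ ≤ n₁ := by omega
          simp [J3obtuse, h, h1, h3, this]
        simp only [he]
        have hstep : ∀ q₂ : Fin n₁,
            Complex.exp (2 * (π : ℂ) * Complex.I * (ρ₃ : ℂ) * (t₂ : ℂ)) *
                (Complex.exp (-(2 * (π : ℂ) * Complex.I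
                    * (((ρ₅ : ℂ) * (ρ₄ : ℂ) - (ψ₂ : ℂ)) * (t₁ : ℂ))))
                  * Sblk n₁ t₁ (m₁ + m₂ - n₁) p.2 q₂) *
              (Complex.exp ((((⟨(p.1 : ℕ) - m₃, hj⟩ : Fin n₂) : ℕ) : ℂ) * θij)
                * Complex.exp (((q₂ : ℕ) : ℂ) * θi))
            = (Complex.exp (2 * (π : ℂ) * Complex.I * (ρ₃ : ℂ) * (t₂ : ℂ))
                * Complex.exp (-(2 * (π : ℂ) * Complex.I
                    * (((ρ₅ : ℂ) * (ρ₄ : ℂ) - (ψ₂ : ℂ)) * (t₁ : ℂ))))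
                * Complex.exp ((((p.1 : ℕ) : ℂ) - (m₃ : ℂ)) * θij))
              * (Sblk n₁ t₁ (m₁ + m₂ - n₁) p.2 q₂ * Complex.exp (((q₂ : ℕ) : ℂ) * θi)) := by
          intro q₂; rw [hcastp]; ring
        simp only [hstep]
        rw [← Finset.mul_sum, sblk_row n₁ (m₁ + m₂ - n₁) t₁ hle' θi hE1]
        have hsub : ((m₁ + m₂ - n₁ : ℕ) : ℂ) = (m₁ : ℂ) + (m₂ : ℂ) - (n₁ : ℂ) := by
          push_cast [Nat.cast_sub (le_of_lt hlt)]; ring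
        rw [hsub]
        have hcc : ((ρ₁ : ℂ) + (ρ₂ : ℂ)) = (ψ₂ : ℂ) - (ρ₅ : ℂ) * (ρ₄ : ℂ) + 1 := by
          exact_mod_cast hc₂ hlt
        simp only [← Complex.exp_add, ← mul_assoc]
        rw [Complex.exp_eq_exp_iff_exists_int]
        exact ⟨w1, by linear_combination hw1
          + (2 * (π : ℂ) * Complex.I * (t₁ : ℂ)) * hcc.symm⟩
    · intro b _ hb
      apply Finset.sum_eq_zero
      intro q₂ _
      have hbn : (b : ℕ) ≠ (p.1 : ℕ) - m₃ := fun hbe => hb (Fin.ext hbe)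
      have h1 : ¬((p.1 : ℕ) < m₃ ∧ (b : ℕ) = (p.1 : ℕ) + (n₂ - m₃)) := by omega
      have h2 : ¬(m₃ ≤ (p.1 : ℕ) ∧ (b : ℕ) + m₃ = (p.1 : ℕ)) := by omega
      simp [J3obtuse, h1, h2]


set_option maxHeartbeats 1600000 in
/-- Theorem 4.4: eigenpairs of `K₃` in the case `cos θα − cos θβ cos θγ < 0`. -/
theorem stmt_8 (n₁ n₂ n₃ : ℕ) (hn₁ : 1 ≤ n₁) (hn₂ : 1 ≤ n₂) (hn₃ : 1 ≤ n₃)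
    (δz : ℝ) (hδz : 0 < δz) (t₁ t₂ t₃ : ℝ)
    (ρ₁ ρ₂ ρ₃ ρ₄ ρ₅ ψ₂ : ℕ) (hρ₁ : ρ₁ ≤ 1) (hρ₂ : ρ₂ ≤ 1) (hρ₃ : ρ₃ ≤ 1)
    (hρ₄ : ρ₄ ≤ 1) (hρ₅ : ρ₅ ≤ 1) (hψ₂ : ψ₂ ≤ 1)
    (m₁ m₂ m₃ : ℕ) (hm₁ : m₁ ≤ n₁) (hm₂ : m₂ ≤ n₁) (hm₃ : m₃ ≤ n₂)
    (hcompat₁ : m₁ + m₂ ≤ n₁ → (ρ₁ : ℤ) + ρ₂ = (ρ₁ : ℤ) * ρ₄ + ψ₂)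
    (hcompat₂ : n₁ < m₁ + m₂ → (ρ₁ : ℤ) + ρ₂ = (ψ₂ : ℤ) - (ρ₅ : ℤ) * ρ₄ + 1)
    (i j k : ℕ) (hi : 1 ≤ i) (hin : i ≤ n₁) (hj : 1 ≤ j) (hjn : j ≤ n₂)
    (hk : 1 ≤ k) (hkn : k ≤ n₃)
    (θi : ℂ) (hθi : θi = 2 * (π : ℂ) * Complex.I * ((i : ℂ) + (t₁ : ℂ)) / (n₁ : ℂ))
    (x : Fin n₁ → ℂ) (hx : ∀ s : Fin n₁, x s = Complex.exp (((s : ℕ) : ℂ) * θi))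
    (t₂hat : ℝ) (ht₂hat : t₂hat = t₂ - (m₁ : ℝ) / n₁ * t₁ + (ρ₁ : ℝ) * t₁)
    (θij : ℂ)
    (hθij : θij = 2 * (π : ℂ) * Complex.I
      * ((((j : ℝ) - (m₁ : ℝ) / n₁ * i + t₂hat : ℝ)) : ℂ) / (n₂ : ℂ))
    (y : Fin n₂ → ℂ) (hy : ∀ s : Fin n₂, y s = Complex.exp (((s : ℕ) : ℂ) * θij))
    (t₃hat : ℝ)
    (ht₃hat : t₃hat = t₃ - (m₃ : ℝ) / n₂ * t₂
      - ((n₂ : ℝ) - m₃) / n₂ * ((m₁ : ℝ) / n₁) * t₁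
      - (m₂ : ℝ) / n₁ * t₁
      + (ρ₃ : ℝ) * t₂ - (m₃ : ℝ) / n₂ * ((ρ₁ : ℝ) * t₁)
      + (ρ₁ : ℝ) * t₁ + (ρ₂ : ℝ) * t₁)
    (θijk : ℂ)
    (hθijk : θijk = 2 * (π : ℂ) * Complex.I
      * ((((k : ℝ) - (m₃ : ℝ) / n₂ * j
          - ((n₂ : ℝ) - m₃) / n₂ * ((m₁ : ℝ) / n₁) * i
          - (m₂ : ℝ) / n₁ * i + t₃hat : ℝ)) : ℂ) / (n₃ : ℂ))
    (z : Fin n₃ → ℂ) (hz : ∀ s : Fin n₃, z s = Complex.exp (((s : ℕ) : ℂ) * θijk)) :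
    (K3 n₁ n₂ n₃ δz t₃ (J3obtuse n₁ n₂ t₁ t₂ ρ₁ ρ₂ ρ₃ ρ₄ ρ₅ ψ₂ m₁ m₂ m₃)).mulVec
        (fun p => z p.1 * y p.2.1 * x p.2.2)
      = ((1 / (δz : ℂ)) * (Complex.exp θijk - 1))
          • (fun p => z p.1 * y p.2.1 * x p.2.2) := by
  have hn₁0 : (n₁ : ℂ) ≠ 0 := Nat.cast_ne_zero.mpr (by omega)
  have hn₂0 : (n₂ : ℂ) ≠ 0 := Nat.cast_ne_zero.mpr (by omega)
  have hn₃0 : (n₃ : ℂ) ≠ 0 := Nat.cast_ne_zero.mpr (by omega)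
  have hr₁0 : (n₁ : ℝ) ≠ 0 := Nat.cast_ne_zero.mpr (by omega)
  have hr₂0 : (n₂ : ℝ) ≠ 0 := Nat.cast_ne_zero.mpr (by omega)
  have A1 : (n₁ : ℂ) * θi = 2 * (π : ℂ) * Complex.I * ((i : ℂ) + (t₁ : ℂ)) := by
    rw [hθi, mul_comm, div_mul_cancel₀ _ hn₁0]
  have A2 : (n₂ : ℂ) * θij = 2 * (π : ℂ) * Complex.I
      * ((((j : ℝ) - (m₁ : ℝ) / n₁ * i + t₂hat : ℝ)) : ℂ) := by
    rw [hθij, mul_comm, div_mul_cancel₀ _ hn₂0]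
  have A3 : (n₃ : ℂ) * θijk = 2 * (π : ℂ) * Complex.I
      * ((((k : ℝ) - (m₃ : ℝ) / n₂ * j
          - ((n₂ : ℝ) - m₃) / n₂ * ((m₁ : ℝ) / n₁) * i
          - (m₂ : ℝ) / n₁ * i + t₃hat : ℝ)) : ℂ) := by
    rw [hθijk, mul_comm, div_mul_cancel₀ _ hn₃0]
  have R2m : (n₁ : ℝ) * ((j : ℝ) - (m₁ : ℝ) / n₁ * i + t₂hat)
      = (n₁ : ℝ) * ((j : ℝ) + t₂ + (ρ₁ : ℝ) * t₁) - (m₁ : ℝ) * ((i : ℝ) + t₁) := by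
    subst ht₂hat; field_simp; ring
  have R2mc : (n₁ : ℂ) * ((((j : ℝ) - (m₁ : ℝ) / n₁ * i + t₂hat : ℝ)) : ℂ)
      = (n₁ : ℂ) * ((j : ℂ) + (t₂ : ℂ) + (ρ₁ : ℂ) * (t₁ : ℂ))
        - (m₁ : ℂ) * ((i : ℂ) + (t₁ : ℂ)) := by
    exact_mod_cast congrArg (Complex.ofReal) R2m
  have Rm : (n₁ : ℝ) * n₂ * ((k : ℝ) - (m₃ : ℝ) / n₂ * j
          - ((n₂ : ℝ) - m₃) / n₂ * ((m₁ : ℝ) / n₁) * i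
          - (m₂ : ℝ) / n₁ * i + t₃hat)
      = (n₁ : ℝ) * n₂ * ((k : ℝ) + t₃ + (ρ₃ : ℝ) * t₂ + ((ρ₁ : ℝ) + ρ₂) * t₁)
        - (n₂ : ℝ) * ((m₁ : ℝ) + m₂) * ((i : ℝ) + t₁)
        - (n₁ : ℝ) * m₃ * ((j : ℝ) - (m₁ : ℝ) / n₁ * i + t₂hat) := by
    subst ht₃hat ht₂hat; field_simp; ring
  have Rmc : (n₁ : ℂ) * n₂ * ((((k : ℝ) - (m₃ : ℝ) / n₂ * j
          - ((n₂ : ℝ) - m₃) / n₂ * ((m₁ : ℝ) / n₁) * i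
          - (m₂ : ℝ) / n₁ * i + t₃hat : ℝ)) : ℂ)
      = (n₁ : ℂ) * n₂ * ((k : ℂ) + (t₃ : ℂ) + (ρ₃ : ℂ) * (t₂ : ℂ)
            + ((ρ₁ : ℂ) + (ρ₂ : ℂ)) * (t₁ : ℂ))
        - (n₂ : ℂ) * ((m₁ : ℂ) + (m₂ : ℂ)) * ((i : ℂ) + (t₁ : ℂ))
        - (n₁ : ℂ) * (m₃ : ℂ) * ((((j : ℝ) - (m₁ : ℝ) / n₁ * i + t₂hat : ℝ)) : ℂ) := by
    exact_mod_cast congrArg (Complex.ofReal) Rm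
  have L1 : (n₁ : ℂ) * θi = 2 * (π : ℂ) * Complex.I * (i : ℂ)
      + 2 * (π : ℂ) * Complex.I * (t₁ : ℂ) := by
    rw [A1]; ring
  have L2 : (n₂ : ℂ) * θij = 2 * (π : ℂ) * Complex.I * (j : ℂ)
      + (2 * (π : ℂ) * Complex.I * (t₂ : ℂ)
        + 2 * (π : ℂ) * Complex.I * (ρ₁ : ℂ) * (t₁ : ℂ) - (m₁ : ℂ) * θi) := by
    refine mul_left_cancel₀ hn₁0 ?_
    linear_combination (n₁ : ℂ) * A2 + 2 * (π : ℂ) * Complex.I * R2mc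
      + (m₁ : ℂ) * A1
  have L3 : (n₃ : ℂ) * θijk = 2 * (π : ℂ) * Complex.I * (k : ℂ)
      + (2 * (π : ℂ) * Complex.I * (t₃ : ℂ)
        + (2 * (π : ℂ) * Complex.I * (ρ₃ : ℂ) * (t₂ : ℂ)
            + 2 * (π : ℂ) * Complex.I * ((ρ₁ : ℂ) + (ρ₂ : ℂ)) * (t₁ : ℂ)
            - ((m₁ : ℂ) + (m₂ : ℂ)) * θi - (m₃ : ℂ) * θij)) := by
    refine mul_left_cancel₀ (mul_ne_zero hn₁0 hn₂0) ?_
    linear_combination (n₁ : ℂ) * (n₂ : ℂ) * A3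
      + 2 * (π : ℂ) * Complex.I * Rmc
      + ((m₁ : ℂ) + (m₂ : ℂ)) * (n₂ : ℂ) * A1
      + (m₃ : ℂ) * (n₁ : ℂ) * A2
  have E1 : Complex.exp ((n₁ : ℂ) * θi)
      = Complex.exp (2 * (π : ℂ) * Complex.I * (t₁ : ℂ)) := by
    rw [L1, Complex.exp_add, exp_nat_two_pi, one_mul]
  have E2 : Complex.exp ((n₂ : ℂ) * θij)
      = Complex.exp (2 * (π : ℂ) * Complex.I * (t₂ : ℂ)
          + 2 * (π : ℂ) * Complex.I * (ρ₁ : ℂ) * (t₁ : ℂ) - (m₁ : ℂ) * θi) := by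
    rw [L2, Complex.exp_add, exp_nat_two_pi, one_mul]
  have E3 : Complex.exp ((n₃ : ℂ) * θijk)
      = Complex.exp (2 * (π : ℂ) * Complex.I * (t₃ : ℂ)) *
        Complex.exp (2 * (π : ℂ) * Complex.I * (ρ₃ : ℂ) * (t₂ : ℂ)
            + 2 * (π : ℂ) * Complex.I * ((ρ₁ : ℂ) + (ρ₂ : ℂ)) * (t₁ : ℂ)
            - ((m₁ : ℂ) + (m₂ : ℂ)) * θi - (m₃ : ℂ) * θij) := by
    rw [L3, Complex.exp_add, exp_nat_two_pi, one_mul, Complex.exp_add]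
  funext p
  simp only [Matrix.mulVec, dotProduct, K3, Matrix.of_apply, Pi.smul_apply, smul_eq_mul]
  have expand : ∀ q : Fin n₃ × Fin n₂ × Fin n₁,
      (1 / (δz : ℂ)) *
        ((if (q.1 : ℕ) = (p.1 : ℕ) + 1 ∧ q.2 = p.2 then (1:ℂ) else 0)
          + (if (p.1 : ℕ) = n₃ - 1 ∧ (q.1 : ℕ) = 0
              then Complex.exp (2 * (π : ℂ) * Complex.I * (t₃ : ℂ))
                * J3obtuse n₁ n₂ t₁ t₂ ρ₁ ρ₂ ρ₃ ρ₄ ρ₅ ψ₂ m₁ m₂ m₃ p.2 q.2 else 0)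
          - (if p = q then 1 else 0)) * (z q.1 * y q.2.1 * x q.2.2)
      = (1 / (δz : ℂ)) *
          ((if (q.1 : ℕ) = (p.1 : ℕ) + 1 ∧ q.2 = p.2 then (1:ℂ) else 0)
              * (z q.1 * y q.2.1 * x q.2.2)
            + (if (p.1 : ℕ) = n₃ - 1 ∧ (q.1 : ℕ) = 0
                then Complex.exp (2 * (π : ℂ) * Complex.I * (t₃ : ℂ))
                  * J3obtuse n₁ n₂ t₁ t₂ ρ₁ ρ₂ ρ₃ ρ₄ ρ₅ ψ₂ m₁ m₂ m₃ p.2 q.2 else 0)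
              * (z q.1 * y q.2.1 * x q.2.2)
            - (if p = q then (1:ℂ) else 0) * (z q.1 * y q.2.1 * x q.2.2)) :=
    fun q => by ring
  rw [Finset.sum_congr rfl (fun q _ => expand q), ← Finset.mul_sum,
    Finset.sum_sub_distrib, Finset.sum_add_distrib]
  have SC : ∑ q : Fin n₃ × Fin n₂ × Fin n₁,
      (if p = q then (1:ℂ) else 0) * (z q.1 * y q.2.1 * x q.2.2)
      = z p.1 * y p.2.1 * x p.2.2 := by
    rw [Finset.sum_eq_single_of_mem p (Finset.mem_univ p)]
    · simp
    · intro b _ hb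
      rw [if_neg (fun h => hb h.symm), zero_mul]
  rw [SC]
  rcases Nat.lt_or_ge ((p.1 : ℕ) + 1) n₃ with hp | hp
  · -- interior row
    have hpne : ¬ (p.1 : ℕ) = n₃ - 1 := by omega
    have SB : ∑ q : Fin n₃ × Fin n₂ × Fin n₁,
        (if (p.1 : ℕ) = n₃ - 1 ∧ (q.1 : ℕ) = 0
            then Complex.exp (2 * (π : ℂ) * Complex.I * (t₃ : ℂ))
              * J3obtuse n₁ n₂ t₁ t₂ ρ₁ ρ₂ ρ₃ ρ₄ ρ₅ ψ₂ m₁ m₂ m₃ p.2 q.2 else 0)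
          * (z q.1 * y q.2.1 * x q.2.2) = 0 := by
      apply Finset.sum_eq_zero
      intro q _
      rw [if_neg (fun h => hpne h.1), zero_mul]
    have SA : ∑ q : Fin n₃ × Fin n₂ × Fin n₁,
        (if (q.1 : ℕ) = (p.1 : ℕ) + 1 ∧ q.2 = p.2 then (1:ℂ) else 0)
          * (z q.1 * y q.2.1 * x q.2.2)
        = Complex.exp θijk * (z p.1 * y p.2.1 * x p.2.2) := by
      rw [Finset.sum_eq_single_of_mem ((⟨(p.1 : ℕ) + 1, hp⟩ : Fin n₃), p.2)
        (Finset.mem_univ _)]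
      · rw [if_pos ⟨rfl, rfl⟩, one_mul, hz, hz]
        rw [show ((((⟨(p.1 : ℕ) + 1, hp⟩ : Fin n₃) : ℕ)) : ℂ) = ((p.1 : ℕ) : ℂ) + 1 by
          push_cast; ring]
        rw [show (((p.1 : ℕ) : ℂ) + 1) * θijk = θijk + ((p.1 : ℕ) : ℂ) * θijk by ring,
          Complex.exp_add]
        ring
      · intro b _ hb
        rw [if_neg, zero_mul]
        rintro ⟨h1, h2⟩
        exact hb (Prod.ext (Fin.ext h1) h2)
    rw [SA, SB]
    ring
  · -- last row
    have hp1 : (p.1 : ℕ) = n₃ - 1 := by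
      have := p.1.isLt; omega
    have SA : ∑ q : Fin n₃ × Fin n₂ × Fin n₁,
        (if (q.1 : ℕ) = (p.1 : ℕ) + 1 ∧ q.2 = p.2 then (1:ℂ) else 0)
          * (z q.1 * y q.2.1 * x q.2.2) = 0 := by
      apply Finset.sum_eq_zero
      intro q _
      have : ¬ ((q.1 : ℕ) = (p.1 : ℕ) + 1 ∧ q.2 = p.2) := by
        rintro ⟨h1, -⟩
        have := q.1.isLt; omega
      rw [if_neg this, zero_mul]
    have SB : ∑ q : Fin n₃ × Fin n₂ × Fin n₁,
        (if (p.1 : ℕ) = n₃ - 1 ∧ (q.1 : ℕ) = 0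
            then Complex.exp (2 * (π : ℂ) * Complex.I * (t₃ : ℂ))
              * J3obtuse n₁ n₂ t₁ t₂ ρ₁ ρ₂ ρ₃ ρ₄ ρ₅ ψ₂ m₁ m₂ m₃ p.2 q.2 else 0)
          * (z q.1 * y q.2.1 * x q.2.2)
        = Complex.exp (2 * (π : ℂ) * Complex.I * (t₃ : ℂ)) *
            (Complex.exp (2 * (π : ℂ) * Complex.I * (ρ₃ : ℂ) * (t₂ : ℂ)
                + 2 * (π : ℂ) * Complex.I * ((ρ₁ : ℂ) + (ρ₂ : ℂ)) * (t₁ : ℂ)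
                - ((m₁ : ℂ) + (m₂ : ℂ)) * θi - (m₃ : ℂ) * θij) *
              (Complex.exp (((p.2.1 : ℕ) : ℂ) * θij)
                * Complex.exp (((p.2.2 : ℕ) : ℂ) * θi))) := by
      rw [Fintype.sum_prod_type]
      have h0 : (0 : ℕ) < n₃ := by omega
      rw [Finset.sum_eq_single_of_mem (⟨0, h0⟩ : Fin n₃) (Finset.mem_univ _)]
      · have hz0 : z ⟨0, h0⟩ = 1 := by
          rw [hz]
          norm_num
        have hterm : ∀ q2 : Fin n₂ × Fin n₁,
            (if (p.1 : ℕ) = n₃ - 1 ∧ (((⟨0, h0⟩ : Fin n₃)) : ℕ) = 0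
                then Complex.exp (2 * (π : ℂ) * Complex.I * (t₃ : ℂ))
                  * J3obtuse n₁ n₂ t₁ t₂ ρ₁ ρ₂ ρ₃ ρ₄ ρ₅ ψ₂ m₁ m₂ m₃ p.2 q2 else 0)
              * (z ⟨0, h0⟩ * y q2.1 * x q2.2)
            = Complex.exp (2 * (π : ℂ) * Complex.I * (t₃ : ℂ)) *
                (J3obtuse n₁ n₂ t₁ t₂ ρ₁ ρ₂ ρ₃ ρ₄ ρ₅ ψ₂ m₁ m₂ m₃ p.2 q2
                  * (Complex.exp (((q2.1 : ℕ) : ℂ) * θij)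
                    * Complex.exp (((q2.2 : ℕ) : ℂ) * θi))) := by
          intro q2
          rw [if_pos ⟨hp1, rfl⟩, hz0, hy, hx]
          ring
        rw [Finset.sum_congr rfl (fun q2 _ => hterm q2), ← Finset.mul_sum,
          j3_row n₁ n₂ t₁ t₂ ρ₁ ρ₂ ρ₃ ρ₄ ρ₅ ψ₂ m₁ m₂ m₃ hm₁ hm₂ hm₃
            hcompat₁ hcompat₂ θi θij E1 E2 p.2]
      · intro b _ hb
        apply Finset.sum_eq_zero
        intro q2 _
        have : ¬ ((p.1 : ℕ) = n₃ - 1 ∧ (b : ℕ) = 0) := by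
          rintro ⟨-, h2⟩
          exact hb (Fin.ext h2)
        rw [if_neg this, zero_mul]
    rw [SA, SB]
    have hzp : z p.1 = Complex.exp (((n₃ : ℂ) - 1) * θijk) := by
      rw [hz]
      congr 1
      rw [show ((p.1 : ℕ) : ℂ) = (((n₃ - 1 : ℕ) : ℕ) : ℂ) by rw [hp1]]
      push_cast [Nat.cast_sub hn₃]
      ring
    have hyp : y p.2.1 = Complex.exp (((p.2.1 : ℕ) : ℂ) * θij) := hy p.2.1
    have hxp : x p.2.2 = Complex.exp (((p.2.2 : ℕ) : ℂ) * θi) := hx p.2.2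
    rw [hzp, hyp, hxp]
    have key : Complex.exp (2 * (π : ℂ) * Complex.I * (t₃ : ℂ)) *
        Complex.exp (2 * (π : ℂ) * Complex.I * (ρ₃ : ℂ) * (t₂ : ℂ)
            + 2 * (π : ℂ) * Complex.I * ((ρ₁ : ℂ) + (ρ₂ : ℂ)) * (t₁ : ℂ)
            - ((m₁ : ℂ) + (m₂ : ℂ)) * θi - (m₃ : ℂ) * θij)
        = Complex.exp θijk * Complex.exp (((n₃ : ℂ) - 1) * θijk) := by
      rw [← E3, ← Complex.exp_add]
      congr 1
      ring
    linear_combination (1 / (δz : ℂ)) *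
      (Complex.exp (((p.2.1 : ℕ) : ℂ) * θij) * Complex.exp (((p.2.2 : ℕ) : ℂ) * θi)) * key
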